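/- Let d_1 ≥ ... ≥ d_n > 0 and D_i(α) = Σ_{j=1}^i d_j^α. Then for every index i and every α > 0, the derivative of α ↦ D_i(α)/D_n(α) is at most (2/α)·ln n. -/

import Mathlib

open Finset Real

/-- Per-term bound: for `0 < x ≤ M` and `2 ≤ N`,
`x * (log M - log x) ≤ 2 log N * x + 2 log N * (M / N^2)`. -/
lemma perterm {x M N : ℝ} (hx : 0 < x) (hxM : x ≤ M) (hN : 2 ≤ N) :
    x * (Real.log M - Real.log x) ≤ 2 * Real.log N * x + 2 * Real.log N * (M / N ^ 2) := by
  have hM : 0 < M := lt_of_lt_of_le hx hxM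
  have hN0 : 0 < N := by linarith
  have hN2 : 0 < N ^ 2 := by positivity
  have h1 : 1 ≤ 2 * Real.log N := by
    have : Real.exp 1 ≤ N ^ 2 := by
      nlinarith [Real.exp_one_lt_d9]
    have := (Real.le_log_iff_exp_le hN2).2 this
    rwa [Real.log_pow] at this
  have hlogdiv : Real.log M - Real.log x = Real.log (M / x) :=
    (Real.log_div (ne_of_gt hM) (ne_of_gt hx)).symm
  have hsplit : Real.log (M / x) = Real.log (M / (x * N ^ 2)) + 2 * Real.log N := by
    rw [show M / x = M / (x * N ^ 2) * N ^ 2 by field_simp, Real.log_mul (by positivity) (by positivity),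
      Real.log_pow]
    push_cast; ring
  have hle : Real.log (M / (x * N ^ 2)) ≤ M / (x * N ^ 2) - 1 :=
    Real.log_le_sub_one_of_pos (by positivity)
  have key : x * (Real.log M - Real.log x) ≤ M / N ^ 2 - x + 2 * Real.log N * x := by
    rw [hlogdiv, hsplit]
    have : x * (M / (x * N ^ 2) + 2 * Real.log N) = M / N ^ 2 + 2 * Real.log N * x := by
      field_simp
    nlinarith [mul_le_mul_of_nonneg_left hle (le_of_lt hx)]
  have hMdiv : 0 ≤ M / N ^ 2 := by positivity
  nlinarith

/-- Key sum bound. -/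
lemma keysum (n : ℕ) (hn : 2 ≤ n) (x : ℕ → ℝ) (hx : ∀ k, k < n → 0 < x k)
    (hle : ∀ k, k < n → x k ≤ x 0) :
    ∑ k ∈ Finset.range n, x k * (Real.log (x 0) - Real.log (x k))
      ≤ 2 * Real.log n * ∑ k ∈ Finset.range n, x k := by
  have hn0 : 0 < n := by omega
  have hN : (2 : ℝ) ≤ (n : ℝ) := by exact_mod_cast hn
  have hN0 : (0 : ℝ) < n := by positivity
  have hlogN : 0 ≤ 2 * Real.log (n : ℝ) := by
    have : (1:ℝ) ≤ n := by linarith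
    have := Real.log_nonneg this
    linarith
  have hx0 : 0 < x 0 := hx 0 hn0
  rw [Finset.range_eq_Ico, Finset.sum_eq_sum_Ico_succ_bot hn0,
    Finset.sum_eq_sum_Ico_succ_bot hn0 x]
  have h0 : x 0 * (Real.log (x 0) - Real.log (x 0)) = 0 := by ring
  rw [h0, zero_add]
  have hstep : ∑ k ∈ Finset.Ico 1 n, x k * (Real.log (x 0) - Real.log (x k))
      ≤ ∑ k ∈ Finset.Ico 1 n, (2 * Real.log n * x k + 2 * Real.log n * (x 0 / (n:ℝ) ^ 2)) := by
    apply Finset.sum_le_sum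
    intro k hk
    rw [Finset.mem_Ico] at hk
    exact perterm (hx k hk.2) (hle k hk.2) hN
  refine hstep.trans ?_
  rw [Finset.sum_add_distrib, ← Finset.mul_sum, Finset.sum_const, Nat.card_Ico,
    nsmul_eq_mul]
  have hcard : ((n - 1 : ℕ) : ℝ) * (2 * Real.log n * (x 0 / (n:ℝ) ^ 2)) ≤ 2 * Real.log n * x 0 := by
    have h1 : ((n - 1 : ℕ) : ℝ) ≤ (n:ℝ) ^ 2 := by
      have : ((n - 1 : ℕ) : ℝ) ≤ (n : ℝ) := by
        have : (n - 1 : ℕ) ≤ n := Nat.sub_le n 1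
        exact_mod_cast this
      nlinarith
    have hx0N : 0 ≤ x 0 / (n:ℝ) ^ 2 := by positivity
    have := mul_le_mul_of_nonneg_right h1 (mul_nonneg hlogN hx0N)
    calc ((n - 1 : ℕ) : ℝ) * (2 * Real.log n * (x 0 / (n:ℝ) ^ 2))
        = ((n - 1 : ℕ) : ℝ) * (2 * Real.log n * (x 0 / (n:ℝ) ^ 2)) := rfl
      _ ≤ (n:ℝ) ^ 2 * (2 * Real.log n * (x 0 / (n:ℝ) ^ 2)) := by nlinarith
      _ = 2 * Real.log n * x 0 := by field_simp
  have : 2 * Real.log n * (x 0 + ∑ k ∈ Finset.Ico 1 n, x k)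
      = 2 * Real.log n * ∑ k ∈ Finset.Ico 1 n, x k + 2 * Real.log n * x 0 := by ring
  simp only [zero_add]
  linarith [hcard]

/-- The derivative of `α ↦ D_i(α)/D_n(α)` is at most `(2/α)·ln n`. -/
theorem stmt5 (n : ℕ) (hn : 2 ≤ n) (d : ℕ → ℝ)
    (hpos : ∀ j, j < n → 0 < d j)
    (hsorted : ∀ j k, j ≤ k → k < n → d k ≤ d j)
    (i : ℕ) (hi : i ≤ n) (α : ℝ) (hα : 0 < α) :
    deriv (fun β : ℝ =>
        (∑ j ∈ Finset.range i, d j ^ β) / (∑ j ∈ Finset.range n, d j ^ β)) α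
      ≤ 2 / α * Real.log n := by
  have hn0 : 0 < n := by omega
  have hBpos : ∀ β : ℝ, 0 < ∑ j ∈ Finset.range n, d j ^ β := fun β =>
    Finset.sum_pos (fun j hj => Real.rpow_pos_of_pos (hpos j (Finset.mem_range.1 hj)) β)
      (by simp [Finset.nonempty_range_iff]; omega)
  have hA : HasDerivAt (fun β : ℝ => ∑ j ∈ Finset.range i, d j ^ β)
      (∑ j ∈ Finset.range i, d j ^ α * Real.log (d j)) α := by
    apply HasDerivAt.fun_sum
    intro j hj
    exact (Real.hasStrictDerivAt_const_rpow
      (hpos j (lt_of_lt_of_le (Finset.mem_range.1 hj) hi)) α).hasDerivAt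
  have hB : HasDerivAt (fun β : ℝ => ∑ j ∈ Finset.range n, d j ^ β)
      (∑ j ∈ Finset.range n, d j ^ α * Real.log (d j)) α := by
    apply HasDerivAt.fun_sum
    intro j hj
    exact (Real.hasStrictDerivAt_const_rpow (hpos j (Finset.mem_range.1 hj)) α).hasDerivAt
  have hdiv := hA.fun_div hB (ne_of_gt (hBpos α))
  rw [hdiv.deriv, div_le_iff₀ (pow_pos (hBpos α) 2)]
  set S := ∑ j ∈ Finset.range n, d j ^ α with hS
  have hSpos : 0 < S := hBpos α
  have hlogn : 0 ≤ Real.log n := Real.log_nonneg (by exact_mod_cast hn0)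
  -- key sum bound applied to x k = d k ^ α
  have hkeysum : ∑ k ∈ Finset.range n, d k ^ α * (Real.log (d 0 ^ α) - Real.log (d k ^ α))
      ≤ 2 * Real.log n * S :=
    keysum n hn (fun k => d k ^ α)
      (fun k hk => Real.rpow_pos_of_pos (hpos k hk) α)
      (fun k hk => Real.rpow_le_rpow (le_of_lt (hpos k hk))
        (hsorted 0 k (Nat.zero_le k) hk) (le_of_lt hα))
  have hcore : ∀ j, j < n →
      ∑ k ∈ Finset.range n, d k ^ α * (Real.log (d j) - Real.log (d k))
        ≤ 2 / α * Real.log n * S := by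
    intro j hj
    have h1 : ∑ k ∈ Finset.range n, d k ^ α * (Real.log (d j) - Real.log (d k))
        ≤ ∑ k ∈ Finset.range n, d k ^ α * (Real.log (d 0) - Real.log (d k)) := by
      apply Finset.sum_le_sum
      intro k hk
      have hk' := Finset.mem_range.1 hk
      have hlog : Real.log (d j) ≤ Real.log (d 0) :=
        Real.log_le_log (hpos j hj) (hsorted 0 j (Nat.zero_le j) hj)
      exact mul_le_mul_of_nonneg_left (sub_le_sub_right hlog _)
        (le_of_lt (Real.rpow_pos_of_pos (hpos k hk') α))
    have h2 : ∑ k ∈ Finset.range n, d k ^ α * (Real.log (d 0) - Real.log (d k))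
        = (1 / α) * ∑ k ∈ Finset.range n,
            d k ^ α * (Real.log (d 0 ^ α) - Real.log (d k ^ α)) := by
      rw [Finset.mul_sum]
      apply Finset.sum_congr rfl
      intro k hk
      rw [Real.log_rpow (hpos 0 hn0), Real.log_rpow (hpos k (Finset.mem_range.1 hk))]
      field_simp
    have h3 : (1 / α) * ∑ k ∈ Finset.range n,
        d k ^ α * (Real.log (d 0 ^ α) - Real.log (d k ^ α))
        ≤ (1 / α) * (2 * Real.log n * S) :=
      mul_le_mul_of_nonneg_left hkeysum (by positivity)
    calc ∑ k ∈ Finset.range n, d k ^ α * (Real.log (d j) - Real.log (d k))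
        ≤ ∑ k ∈ Finset.range n, d k ^ α * (Real.log (d 0) - Real.log (d k)) := h1
      _ = (1 / α) * ∑ k ∈ Finset.range n,
            d k ^ α * (Real.log (d 0 ^ α) - Real.log (d k ^ α)) := h2
      _ ≤ (1 / α) * (2 * Real.log n * S) := h3
      _ = 2 / α * Real.log n * S := by field_simp
  -- rewrite the numerator as a double sum
  have hinner : ∀ j : ℕ,
      ∑ k ∈ Finset.range n, d k ^ α * (Real.log (d j) - Real.log (d k))
        = S * Real.log (d j) - ∑ k ∈ Finset.range n, d k ^ α * Real.log (d k) := by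
    intro j
    simp only [mul_sub]
    rw [Finset.sum_sub_distrib, ← Finset.sum_mul]
  have hnum : (∑ j ∈ Finset.range i, d j ^ α * Real.log (d j)) * S
      - (∑ j ∈ Finset.range i, d j ^ α) * ∑ j ∈ Finset.range n, d j ^ α * Real.log (d j)
      = ∑ j ∈ Finset.range i, d j ^ α *
          ∑ k ∈ Finset.range n, d k ^ α * (Real.log (d j) - Real.log (d k)) := by
    rw [Finset.sum_mul, Finset.sum_mul, ← Finset.sum_sub_distrib]
    apply Finset.sum_congr rfl
    intro j hj
    rw [hinner j]
    ring
  rw [hnum]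
  have hAle : (∑ j ∈ Finset.range i, d j ^ α) ≤ S := by
    apply Finset.sum_le_sum_of_subset_of_nonneg
      (Finset.range_subset_range.2 hi)
    intro k hk _
    exact le_of_lt (Real.rpow_pos_of_pos (hpos k (Finset.mem_range.1 hk)) α)
  have hC : 0 ≤ 2 / α * Real.log n * S := by positivity
  calc ∑ j ∈ Finset.range i, d j ^ α *
          ∑ k ∈ Finset.range n, d k ^ α * (Real.log (d j) - Real.log (d k))
      ≤ ∑ j ∈ Finset.range i, d j ^ α * (2 / α * Real.log n * S) := by
        apply Finset.sum_le_sum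
        intro j hj
        exact mul_le_mul_of_nonneg_left
          (hcore j (lt_of_lt_of_le (Finset.mem_range.1 hj) hi))
          (le_of_lt (Real.rpow_pos_of_pos (hpos j (lt_of_lt_of_le (Finset.mem_range.1 hj) hi)) α))
    _ = (∑ j ∈ Finset.range i, d j ^ α) * (2 / α * Real.log n * S) := by
        rw [← Finset.sum_mul]
    _ ≤ S * (2 / α * Real.log n * S) := mul_le_mul_of_nonneg_right hAle hC
    _ = 2 / α * Real.log n * S ^ 2 := by ring
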